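/- Let A be a finite set, let ℓ ∈ ℕ, and let G be a finite set of conservative gates, each an element of Sym(A^j) for some j ≤ ℓ. For n ≥ ℓ and a conservative permutation f of A^n, define the parity sequence φ(f) to be the function assigning to each weight class c of A^n the sign (as an element of ℤ/2) of the restriction of f to c. Then for every n ≥ ℓ, the image under φ of the subgroup of Sym(A^n) generated by all extensions to arity n of elements of G (every element of which is conservative) contains at most 2^{|G|} distinct parity sequences. -/

import Mathlib

/-- The wire permutation `π_α` of `A^n` induced by `α ∈ S_n`: `π_α(x) i = x (α⁻¹ i)`. -/
def wirePerm {A : Type*} {n : ℕ} (α : Equiv.Perm (Fin n)) : Equiv.Perm (Fin n → A) :=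
  Equiv.arrowCongr α (Equiv.refl A)

/-- Splitting `A^(k+ℓ)` into `A^k × A^ℓ`. -/
def splitEquiv (A : Type*) (k ℓ : ℕ) : (Fin (k + ℓ) → A) ≃ (Fin k → A) × (Fin ℓ → A) :=
  (Equiv.arrowCongr finSumFinEquiv.symm (Equiv.refl A)).trans
    (Equiv.sumArrowEquivProdArrow _ _ A)

/-- `f ⊕ id`: the permutation of `A^n` acting as `f` on the first `ℓ` coordinates and
fixing the remaining ones. -/
def oplusId {A : Type*} {ℓ n : ℕ} (h : ℓ ≤ n) (f : Equiv.Perm (Fin ℓ → A)) :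
    Equiv.Perm (Fin n → A) :=
  (((Equiv.arrowCongr (finCongr (Nat.add_sub_cancel' h).symm) (Equiv.refl A)).trans
    (splitEquiv A ℓ (n - ℓ))).symm).permCongr
      (Equiv.prodCongr f (Equiv.refl (Fin (n - ℓ) → A)))

/-- `g ∈ Sym(A^n)` is an extension of `f ∈ Sym(A^ℓ)` iff it is a conjugate of `f ⊕ id`
by a wire permutation. -/
def IsExtensionOf {A : Type*} {ℓ n : ℕ} (f : Equiv.Perm (Fin ℓ → A))
    (g : Equiv.Perm (Fin n → A)) : Prop :=
  ∃ (h : ℓ ≤ n) (α : Equiv.Perm (Fin n)),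
    g = wirePerm α * oplusId h f * (wirePerm α)⁻¹

/-- The weight of a word `x ∈ A^n`: the number of occurrences of each symbol. -/
def weight {A : Type*} [DecidableEq A] {n : ℕ} (x : Fin n → A) : A → ℕ :=
  fun a => (Finset.univ.filter fun i => x i = a).card

/-- A permutation of `A^n` is conservative if it preserves weights. -/
def IsConservative {A : Type*} [DecidableEq A] {n : ℕ} (f : Equiv.Perm (Fin n → A)) : Prop :=
  ∀ x, weight (f x) = weight x

section wtlemmas
variable {A : Type*} [DecidableEq A]

def wt {I : Type*} [Fintype I] (x : I → A) : A → ℕ :=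
  fun a => (Finset.univ.filter fun i => x i = a).card

lemma weight_eq_wt {n : ℕ} (x : Fin n → A) : weight x = wt x := rfl

lemma wt_comp_equiv {I J : Type*} [Fintype I] [Fintype J] (e : J ≃ I) (x : I → A) :
    wt (x ∘ e) = wt x := by
  funext a
  exact Finset.card_equiv e (by simp)

lemma wt_sum {I J : Type*} [Fintype I] [Fintype J] (x : I ⊕ J → A) (a : A) :
    wt x a = wt (x ∘ Sum.inl) a + wt (x ∘ Sum.inr) a := by
  simp only [wt, ← Fintype.card_subtype]
  rw [Fintype.card_congr (Equiv.subtypeSum (p := fun c => x c = a)), Fintype.card_sum]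
  rfl

lemma oplusId_apply {ℓ n : ℕ} (h : ℓ ≤ n) (f : Equiv.Perm (Fin ℓ → A)) (x : Fin n → A) :
    oplusId h f x =
      (Sum.elim
        (f (x ∘ ((finCongr (Nat.add_sub_cancel' h).symm).trans finSumFinEquiv.symm).symm ∘ Sum.inl))
        (x ∘ ((finCongr (Nat.add_sub_cancel' h).symm).trans finSumFinEquiv.symm).symm ∘ Sum.inr))
        ∘ ((finCongr (Nat.add_sub_cancel' h).symm).trans finSumFinEquiv.symm) := by
  funext i
  simp only [oplusId, splitEquiv, Equiv.permCongr_apply, Equiv.symm_trans_apply,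
    Equiv.symm_symm, Equiv.trans_apply, Equiv.prodCongr_apply, Function.comp_apply]
  rcases hs : ((finCongr (Nat.add_sub_cancel' h).symm).trans finSumFinEquiv.symm) i with s | s <;>
    simp [Equiv.sumArrowEquivProdArrow, Function.comp_def, hs] <;> rfl

lemma isConservative_wirePerm {n : ℕ} (α : Equiv.Perm (Fin n)) :
    IsConservative (wirePerm (A := A) α) := by
  intro x
  have : wirePerm (A := A) α x = x ∘ α.symm := rfl
  rw [this, weight_eq_wt, weight_eq_wt, wt_comp_equiv]

lemma isConservative_oplusId {ℓ n : ℕ} (h : ℓ ≤ n) (f : Equiv.Perm (Fin ℓ → A))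
    (hf : IsConservative f) : IsConservative (oplusId h f) := by
  intro x
  set e := (finCongr (Nat.add_sub_cancel' h).symm).trans finSumFinEquiv.symm with he
  have hx : x = (Sum.elim (x ∘ e.symm ∘ Sum.inl) (x ∘ e.symm ∘ Sum.inr)) ∘ e := by
    funext i; rcases hs : e i with s | s <;>
      simp only [hs, Sum.elim_inl, Sum.elim_inr, Function.comp_apply] <;>
      rw [← hs, Equiv.symm_apply_apply]
  rw [oplusId_apply, weight_eq_wt, ← he, wt_comp_equiv]
  conv_rhs => rw [hx]
  rw [weight_eq_wt, wt_comp_equiv]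
  funext a
  rw [wt_sum, wt_sum]
  simp only [Sum.elim_comp_inl, Sum.elim_comp_inr]
  have := hf (x ∘ e.symm ∘ Sum.inl)
  rw [weight_eq_wt, weight_eq_wt] at this
  rw [this]

lemma IsConservative.mul {n : ℕ} {f g : Equiv.Perm (Fin n → A)}
    (hf : IsConservative f) (hg : IsConservative g) : IsConservative (f * g) := by
  intro x
  rw [Equiv.Perm.mul_apply, hf, hg]

lemma IsConservative.one {n : ℕ} : IsConservative (1 : Equiv.Perm (Fin n → A)) := fun _ => rfl

lemma IsConservative.inv {n : ℕ} {f : Equiv.Perm (Fin n → A)}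
    (hf : IsConservative f) : IsConservative f⁻¹ := by
  intro x
  have := hf (f⁻¹ x)
  rw [← Equiv.Perm.mul_apply, mul_inv_cancel, Equiv.Perm.one_apply] at this
  exact this.symm

end wtlemmas

section phi
variable {A : Type*} [Fintype A] [DecidableEq A] {n : ℕ}

noncomputable def phi (f : Equiv.Perm (Fin n → A)) : (A → ℕ) → ℤˣ :=
  letI := Classical.propDecidable (IsConservative f)
  if hf : IsConservative f then
    fun w => Equiv.Perm.sign (f.subtypePerm (p := fun x => weight x = w)
      (fun x => by simp only [hf x]))
  else 1

lemma phi_mul {f g : Equiv.Perm (Fin n → A)} (hf : IsConservative f) (hg : IsConservative g) :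
    phi (f * g) = phi f * phi g := by
  simp only [phi]
  rw [dif_pos hf, dif_pos hg, dif_pos (hf.mul hg)]
  funext w
  have : ((f * g).subtypePerm (p := fun x => weight x = w)
      (fun x => by simp only [(hf.mul hg) x]) : Equiv.Perm {x // weight x = w}) =
      (f.subtypePerm (fun x => by simp only [hf x])) *
      (g.subtypePerm (fun x => by simp only [hg x])) := rfl
  rw [this, map_mul]
  rfl

lemma phi_one : phi (1 : Equiv.Perm (Fin n → A)) = 1 := by
  simp only [phi]
  rw [dif_pos IsConservative.one]
  funext w
  rw [Equiv.Perm.subtypePerm_one, map_one]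
  rfl

lemma units_sq (u : (A → ℕ) → ℤˣ) : u * u = 1 := by
  funext w
  exact Int.units_mul_self _

lemma phi_inv {f : Equiv.Perm (Fin n → A)} (hf : IsConservative f) :
    phi f⁻¹ = phi f := by
  have h1 : phi f⁻¹ * phi f = 1 := by rw [← phi_mul hf.inv hf, inv_mul_cancel, phi_one]
  have h2 : phi f * phi f = 1 := units_sq _
  calc phi f⁻¹ = phi f⁻¹ * (phi f * phi f) := by rw [h2, mul_one]
    _ = (phi f⁻¹ * phi f) * phi f := by rw [mul_assoc]
    _ = phi f := by rw [h1, one_mul]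

end phi

lemma prod_mul_prod_symmDiff {M : Type*} [CommMonoid M] (hM : ∀ x : M, x * x = 1)
    {ι : Type*} [DecidableEq ι] (s : ι → M) (c d : Finset ι) :
    (∏ i ∈ c, s i) * ∏ i ∈ d, s i = ∏ i ∈ symmDiff c d, s i := by
  rw [← Finset.prod_union_inter]
  have hu : c ∪ d = symmDiff c d ∪ (c ∩ d) := (symmDiff_sup_inf c d).symm
  have hdisj : Disjoint (symmDiff c d) (c ∩ d) := disjoint_symmDiff_inf c d
  rw [hu, Finset.prod_union hdisj, mul_assoc, ← Finset.prod_mul_distrib]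
  simp [hM]

/-- for a finite set of conservative gates of arities at most `ℓ`, for every
`n ≥ ℓ` the parity sequences (the signs of the restrictions to the weight classes) of the
elements of the subgroup of `Sym(A^n)` generated by all extensions of the gates take at most
`2 ^ |G|` distinct values. -/
theorem stmt18 (A : Type*) [Fintype A] [DecidableEq A] (l : ℕ)
    (m : ℕ) (ar : Fin m → ℕ) (har : ∀ i, ar i ≤ l)
    (G : ∀ i : Fin m, Equiv.Perm (Fin (ar i) → A)) (hG : ∀ i, IsConservative (G i))
    (n : ℕ) (hn : l ≤ n) :
    Set.ncard {s : (A → ℕ) → ℤˣ |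
      ∃ f ∈ Subgroup.closure
        {g : Equiv.Perm (Fin n → A) | ∃ i : Fin m, IsExtensionOf (G i) g},
      ∃ hf : IsConservative f,
        s = fun w => Equiv.Perm.sign (f.subtypePerm (p := fun x => weight x = w)
          (fun x => by simp only [hf x]))} ≤ 2 ^ m := by
  classical
  set s : Fin m → ((A → ℕ) → ℤˣ) := fun i => phi (oplusId (le_trans (har i) hn) (G i)) with hsdef
  set F : Finset (Fin m) → ((A → ℕ) → ℤˣ) := fun c => ∏ i ∈ c, s i with hF
  have key : ∀ f ∈ Subgroup.closure
      {g : Equiv.Perm (Fin n → A) | ∃ i : Fin m, IsExtensionOf (G i) g},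
      IsConservative f ∧ phi f ∈ Set.range F := by
    intro f hf
    induction hf using Subgroup.closure_induction with
    | mem x hx =>
      obtain ⟨i, h, α, rfl⟩ := hx
      have hop : IsConservative (oplusId h (G i)) := isConservative_oplusId h _ (hG i)
      have hw := isConservative_wirePerm (A := A) α
      refine ⟨(hw.mul hop).mul hw.inv, ?_⟩
      have heq : phi (wirePerm α * oplusId h (G i) * (wirePerm (A := A) α)⁻¹)
          = phi (oplusId h (G i)) := by
        rw [phi_mul (hw.mul hop) hw.inv, phi_mul hw hop, phi_inv hw,
          mul_comm (phi (wirePerm α)) (phi (oplusId h (G i))), mul_assoc,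
          units_sq, mul_one]
      rw [heq]
      exact ⟨{i}, (Finset.prod_singleton (f := s) (a := i))⟩
    | one =>
      exact ⟨IsConservative.one, ⟨∅, by rw [phi_one]; exact Finset.prod_empty⟩⟩
    | mul x y hx hy ihx ihy =>
      obtain ⟨hcx, cx, hFx⟩ := ihx
      obtain ⟨hcy, cy, hFy⟩ := ihy
      refine ⟨hcx.mul hcy, ⟨symmDiff cx cy, ?_⟩⟩
      rw [phi_mul hcx hcy, ← hFx, ← hFy]
      exact (prod_mul_prod_symmDiff units_sq s cx cy).symm
    | inv x hx ihx =>
      obtain ⟨hcx, cx, hFx⟩ := ihx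
      exact ⟨hcx.inv, ⟨cx, by rw [phi_inv hcx, hFx]⟩⟩
  have hsub : {s : (A → ℕ) → ℤˣ |
      ∃ f ∈ Subgroup.closure
        {g : Equiv.Perm (Fin n → A) | ∃ i : Fin m, IsExtensionOf (G i) g},
      ∃ hf : IsConservative f,
        s = fun w => Equiv.Perm.sign (f.subtypePerm (p := fun x => weight x = w)
          (fun x => by simp only [hf x]))} ⊆ Set.range F := by
    rintro t ⟨f, hfcl, hfc, rfl⟩
    have hphi : phi f = fun w => Equiv.Perm.sign (f.subtypePerm (p := fun x => weight x = w)
        (fun x => by simp only [hfc x])) := by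
      simp only [phi]
      rw [dif_pos hfc]
    rw [← hphi]
    exact (key f hfcl).2
  refine le_trans (Set.ncard_le_ncard hsub (Set.finite_range F)) ?_
  rw [← Set.image_univ]
  refine le_trans (Set.ncard_image_le Set.finite_univ) ?_
  rw [Set.ncard_univ, Nat.card_eq_fintype_card, Fintype.card_finset, Fintype.card_fin]
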